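/- arXiv:2405.07228 — 2 statements merged into one kernel-verified Lean document; each statement's English description precedes it below -/
import Mathlib

section
/- The first moment of P_{η}^{α} is P_{η}^{α}(t; x) = x + (1+α)/η, i.e., exp(−ηx/2)·2^{−α−1}·Σ_{κ=0}^∞ 2^{−κ} L_κ^{(α)}(−ηx/2)·(κ/η) = x + (1+α)/η. -/
open Real MeasureTheory Filter Set

open Topology
lemma prod_gamma {β : ℝ} (hβ : 0 < β) (j : ℕ) :
    (∏ s ∈ Finset.range j, (β + s)) * Real.Gamma β = Real.Gamma (β + j) := by
  induction j with
  | zero => simp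
  | succ n ih =>
    have h1 : β + (n : ℝ) ≠ 0 := by positivity
    have : (β + (n+1 : ℕ) : ℝ) = (β + n) + 1 := by push_cast; ring
    rw [this, Real.Gamma_add_one h1, ← ih, Finset.prod_range_succ]
    ring

lemma integrable_gj {β : ℝ} (hβ : 0 < β) (j : ℕ) :
    IntegrableOn (fun u : ℝ => Real.exp (-u) * u ^ (β - 1) * ((u / 2) ^ j / (Nat.factorial j))) (Ioi 0) := by
  have h := Real.GammaIntegral_convergent (s := β + j) (by positivity)
  have h2 := (h.const_mul ((2:ℝ)⁻¹ ^ j / (Nat.factorial j)))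
  apply (integrableOn_congr_fun ?_ measurableSet_Ioi).mpr h2
  intro u hu
  have hu' : (0:ℝ) < u := hu
  have : u ^ (β + j - 1) = u ^ (β - 1) * u ^ j := by
    rw [← Real.rpow_natCast u j, ← Real.rpow_add hu']
    ring_nf
  simp only
  rw [this, div_pow, div_eq_mul_inv (u ^ j) ((2:ℝ) ^ j), ← inv_pow]
  ring

lemma integral_gj {β : ℝ} (hβ : 0 < β) (j : ℕ) :
    ∫ u in Ioi (0:ℝ), Real.exp (-u) * u ^ (β - 1) * ((u / 2) ^ j / (Nat.factorial j)) =
      ((∏ s ∈ Finset.range j, (β + s)) / (Nat.factorial j) * (2:ℝ)⁻¹ ^ j) * Real.Gamma β := by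
  have hbj : (0:ℝ) < β + j := by positivity
  have h1 : ∫ u in Ioi (0:ℝ), Real.exp (-u) * u ^ (β - 1) * ((u / 2) ^ j / (Nat.factorial j))
      = ∫ u in Ioi (0:ℝ), ((2:ℝ)⁻¹ ^ j / (Nat.factorial j)) * (Real.exp (-u) * u ^ (β + j - 1)) := by
    apply setIntegral_congr_fun measurableSet_Ioi
    intro u hu
    have hu' : (0:ℝ) < u := hu
    have : u ^ (β + j - 1) = u ^ (β - 1) * u ^ j := by
      rw [← Real.rpow_natCast u j, ← Real.rpow_add hu']
      ring_nf
    simp only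
    rw [this, div_pow, div_eq_mul_inv (u ^ j) ((2:ℝ) ^ j), ← inv_pow]
    ring
  rw [h1, integral_const_mul, ← Real.Gamma_eq_integral hbj, ← prod_gamma hβ j]
  ring

lemma hasSum_b {β : ℝ} (hβ : 0 < β) :
    HasSum (fun j : ℕ => (∏ s ∈ Finset.range j, (β + s)) / (Nat.factorial j) * (2:ℝ)⁻¹ ^ j)
      ((2:ℝ) ^ β) := by
  have hΓ : 0 < Real.Gamma β := Real.Gamma_pos_of_pos hβ
  set c : ℕ → ℝ := fun j => (∏ s ∈ Finset.range j, (β + s)) / (Nat.factorial j) * (2:ℝ)⁻¹ ^ j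
    with hc_def
  have hc : ∀ j, 0 ≤ c j := by
    intro j
    have : 0 ≤ ∏ s ∈ Finset.range j, (β + s) :=
      Finset.prod_nonneg fun s _ => by positivity
    positivity
  rw [hasSum_iff_tendsto_nat_of_nonneg hc]
  set f : ℕ → ℝ → ℝ := fun n u =>
    Real.exp (-u) * u ^ (β - 1) * (∑ j ∈ Finset.range n, (u / 2) ^ j / (Nat.factorial j))
    with hf_def
  set F : ℝ → ℝ := fun u => u ^ (β - 1) * Real.exp (-(2⁻¹ * u)) with hF_def
  have hfi : ∀ n, Integrable (f n) (volume.restrict (Ioi 0)) := by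
    intro n
    have : f n = fun u => ∑ j ∈ Finset.range n,
        Real.exp (-u) * u ^ (β - 1) * ((u / 2) ^ j / (Nat.factorial j)) := by
      funext u; rw [hf_def]; simp only; rw [Finset.mul_sum]
    rw [this]
    exact integrable_finset_sum _ fun j _ => integrable_gj hβ j
  have hint : ∀ n, ∫ u in Ioi (0:ℝ), f n u =
      (∑ j ∈ Finset.range n, c j) * Real.Gamma β := by
    intro n
    have : ∀ u, f n u = ∑ j ∈ Finset.range n,
        Real.exp (-u) * u ^ (β - 1) * ((u / 2) ^ j / (Nat.factorial j)) := by
      intro u; rw [hf_def]; simp only; rw [Finset.mul_sum]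
    simp_rw [this]
    rw [MeasureTheory.integral_finset_sum _ fun j _ => integrable_gj hβ j]
    simp_rw [integral_gj hβ]
    rw [← Finset.sum_mul]
  have hFi : Integrable F (volume.restrict (Ioi 0)) := by
    have hg := Real.GammaIntegral_convergent hβ
    have h2 : IntegrableOn (fun u : ℝ => Real.exp (-(2⁻¹ * u)) * (2⁻¹ * u) ^ (β - 1)) (Ioi 0) := by
      have := (integrableOn_Ioi_comp_mul_left_iff
        (fun x : ℝ => Real.exp (-x) * x ^ (β - 1)) 0 (a := 2⁻¹) (by norm_num)).mpr
      simp only [mul_zero] at this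
      exact this hg
    have h3 := h2.const_mul ((2:ℝ) ^ (β - 1))
    apply (integrableOn_congr_fun ?_ measurableSet_Ioi).mpr h3
    intro u hu
    have hu' : (0:ℝ) < u := hu
    have : (2⁻¹ * u) ^ (β - 1) = (2:ℝ)⁻¹ ^ (β - 1) * u ^ (β - 1) :=
      Real.mul_rpow (by norm_num) hu'.le
    simp only [hF_def, this]
    have h4 : (2:ℝ) ^ (β - 1) * (2:ℝ)⁻¹ ^ (β - 1) = 1 := by
      rw [← Real.mul_rpow (by norm_num) (by norm_num)]
      norm_num
    linear_combination (-(Real.exp (-(2⁻¹ * u)) * u ^ (β - 1))) * h4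
  have hFval : ∫ u in Ioi (0:ℝ), F u = (2:ℝ) ^ β * Real.Gamma β := by
    rw [hF_def]
    simp only
    rw [Real.integral_rpow_mul_exp_neg_mul_Ioi hβ (by norm_num : (0:ℝ) < 2⁻¹)]
    norm_num
  have hmono : ∀ᵐ u ∂(volume.restrict (Ioi (0:ℝ))), Monotone fun n => f n u := by
    refine (ae_restrict_iff' measurableSet_Ioi).mpr (ae_of_all _ fun u hu => ?_)
    have hu' : (0:ℝ) < u := hu
    apply monotone_nat_of_le_succ
    intro n
    simp only [hf_def]
    have hle : (∑ j ∈ Finset.range n, (u / 2) ^ j / (Nat.factorial j)) ≤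
        ∑ j ∈ Finset.range (n+1), (u / 2) ^ j / (Nat.factorial j) := by
      apply Finset.sum_le_sum_of_subset_of_nonneg (Finset.range_subset_range.mpr (Nat.le_succ n))
      intro j _ _
      positivity
    have hpos : (0:ℝ) ≤ Real.exp (-u) * u ^ (β - 1) := by positivity
    exact mul_le_mul_of_nonneg_left hle hpos
  have htend : ∀ᵐ u ∂(volume.restrict (Ioi (0:ℝ))),
      Tendsto (fun n => f n u) atTop (𝓝 (F u)) := by
    refine (ae_restrict_iff' measurableSet_Ioi).mpr (ae_of_all _ fun u hu => ?_)
    have hs : HasSum (fun j : ℕ => (u / 2) ^ j / (Nat.factorial j)) (Real.exp (u / 2)) := by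
      rw [Real.exp_eq_exp_ℝ]
      exact NormedSpace.expSeries_div_hasSum_exp (u / 2)
    have := (hs.tendsto_sum_nat.const_mul (Real.exp (-u) * u ^ (β - 1)))
    convert this using 2
    rw [hF_def]
    simp only
    have h5 : Real.exp (-u) * Real.exp (u/2) = Real.exp (-(2⁻¹*u)) := by
      rw [← Real.exp_add]; ring_nf
    linear_combination (-(u ^ (β - 1))) * h5
  have hmain := MeasureTheory.integral_tendsto_of_tendsto_of_monotone hfi hFi hmono htend
  rw [hFval] at hmain
  simp_rw [hint] at hmain
  have := hmain.const_mul (Real.Gamma β)⁻¹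
  have heq : (Real.Gamma β)⁻¹ * ((2:ℝ) ^ β * Real.Gamma β) = (2:ℝ) ^ β := by
    field_simp
  rw [heq] at this
  convert this using 2 with n
  rw [mul_comm]
  field_simp

lemma hasSum_jb {β : ℝ} (hβ : 0 < β) :
    HasSum (fun j : ℕ => (j : ℝ) * ((∏ s ∈ Finset.range j, (β + s)) / (Nat.factorial j) * (2:ℝ)⁻¹ ^ j))
      (β * (2:ℝ) ^ β) := by
  have h1 := (hasSum_b (by positivity : (0:ℝ) < β + 1)).mul_left (β / 2)
  have h2 : (fun j : ℕ => β / 2 * ((∏ s ∈ Finset.range j, (β + 1 + s)) / (Nat.factorial j) * (2:ℝ)⁻¹ ^ j))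
      = fun j : ℕ => ((j:ℕ)+1 : ℝ) * ((∏ s ∈ Finset.range (j+1), (β + s)) / (Nat.factorial (j+1)) * (2:ℝ)⁻¹ ^ (j+1)) := by
    funext j
    have hp : ∏ s ∈ Finset.range (j+1), (β + s) = (∏ s ∈ Finset.range j, (β + 1 + s)) * β := by
      rw [Finset.prod_range_succ']
      congr 1
      · exact Finset.prod_congr rfl fun s _ => by push_cast; ring
      · norm_num
    rw [hp, Nat.factorial_succ]
    have : ((j:ℝ) + 1) ≠ 0 := by positivity
    push_cast
    field_simp
    ring
  rw [h2] at h1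
  have h3 : HasSum (fun j : ℕ => ((j+1:ℕ) : ℝ) * ((∏ s ∈ Finset.range (j+1), (β + s)) / (Nat.factorial (j+1)) * (2:ℝ)⁻¹ ^ (j+1))) (β / 2 * (2:ℝ) ^ (β+1)) := by
    convert h1 using 2 with j
    · rfl
    push_cast
    ring
  have h4 := (hasSum_nat_add_iff (f := fun j : ℕ => (j : ℝ) * ((∏ s ∈ Finset.range j, (β + s)) / (Nat.factorial j) * (2:ℝ)⁻¹ ^ j)) 1).mp h3
  convert h4 using 1
  · rfl
  simp only [Finset.sum_range_one, Nat.cast_zero, zero_mul, add_zero]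
  rw [Real.rpow_add_one (by norm_num : (2:ℝ) ≠ 0)]
  ring

lemma hasSum_expz (z : ℝ) :
    HasSum (fun ι : ℕ => z ^ ι / (Nat.factorial ι)) (Real.exp z) := by
  rw [Real.exp_eq_exp_ℝ]
  exact NormedSpace.expSeries_div_hasSum_exp z

lemma hasSum_iexpz (z : ℝ) :
    HasSum (fun ι : ℕ => (ι : ℝ) * (z ^ ι / (Nat.factorial ι))) (z * Real.exp z) := by
  have h1 := (hasSum_expz z).mul_left z
  have h2 : (fun ι : ℕ => z * (z ^ ι / (Nat.factorial ι)))
      = fun ι : ℕ => ((ι:ℕ)+1 : ℝ) * (z ^ (ι+1) / (Nat.factorial (ι+1))) := by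
    funext ι
    rw [Nat.factorial_succ, pow_succ]
    have : ((ι:ℝ) + 1) ≠ 0 := by positivity
    push_cast
    field_simp
  rw [h2] at h1
  have h3 : HasSum (fun ι : ℕ => ((ι+1:ℕ) : ℝ) * (z ^ (ι+1) / (Nat.factorial (ι+1)))) (z * Real.exp z) := by
    convert h1 using 2 with ι
    · rfl
    push_cast
    ring
  have h4 := (hasSum_nat_add_iff (f := fun ι : ℕ => (ι : ℝ) * (z ^ ι / (Nat.factorial ι))) 1).mp h3
  convert h4 using 1
  · rfl
  simp

/-- Generalized Laguerre polynomial `L_κ^{(α)}(x)`. -/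
noncomputable def lag (κ : ℕ) (α x : ℝ) : ℝ :=
  ∑ ι ∈ Finset.range (κ + 1),
    (-1 : ℝ) ^ ι / (Nat.factorial ι) *
      ((∏ s ∈ Finset.range (κ - ι), (α + ι + 1 + s)) / (Nat.factorial (κ - ι))) * x ^ ι
/-- The operators `P_η^α(Φ; x)` based on modified Laguerre polynomials. -/
noncomputable def Pop (η α : ℝ) (Φ : ℝ → ℝ) (x : ℝ) : ℝ :=
  Real.exp (-(η * x) / 2) * (2 : ℝ) ^ (-α - 1) *
    ∑' κ : ℕ, (2 : ℝ) ^ (-(κ : ℝ)) * lag κ α (-(η * x) / 2) * Φ ((κ : ℝ) / η)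

/-- The first moment of `P_η^α`. -/
theorem stmt4 (α η x : ℝ) (hα : -1 < α) (hη : 0 < η) (hx : 0 ≤ x) :
    Pop η α (fun t => t) x = x + (1 + α) / η := by
  set z : ℝ := η * x / 2 with hz_def
  have hz : 0 ≤ z := by positivity
  set F : ℕ × ℕ → ℝ := fun p =>
    (2:ℝ)⁻¹ ^ (p.1 + p.2) * (z ^ p.1 / (Nat.factorial p.1)) *
      ((∏ s ∈ Finset.range p.2, (α + p.1 + 1 + s)) / (Nat.factorial p.2)) *
      (((p.1 + p.2 : ℕ) : ℝ) / η) with hF_def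
  have hβpos : ∀ ι : ℕ, (0:ℝ) < α + ι + 1 := by
    intro ι
    have : (0:ℝ) ≤ (ι:ℝ) := Nat.cast_nonneg ι
    linarith
  have hFnonneg : ∀ p, 0 ≤ F p := by
    intro p
    have h1 : 0 ≤ ∏ s ∈ Finset.range p.2, (α + p.1 + 1 + s) :=
      Finset.prod_nonneg fun s _ => by
        have := hβpos p.1
        have : (0:ℝ) ≤ (s:ℝ) := Nat.cast_nonneg s
        linarith [hβpos p.1]
    have h2 : (0:ℝ) ≤ ((p.1 + p.2 : ℕ) : ℝ) := Nat.cast_nonneg _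
    simp only [hF_def]
    positivity
  set A : ℕ → ℝ := fun ι => (2:ℝ) ^ (α+1) / η * (z ^ ι / (Nat.factorial ι)) * (2 * ι + α + 1)
    with hA_def
  have hinner : ∀ ι : ℕ, HasSum (fun j => F (ι, j)) (A ι) := by
    intro ι
    have hβ := hβpos ι
    have h1 := (((hasSum_b hβ).mul_left (ι:ℝ)).add (hasSum_jb hβ)).mul_left
      (z ^ ι / (Nat.factorial ι) * (2:ℝ)⁻¹ ^ ι / η)
    have hfun : (fun j : ℕ => z ^ ι / (Nat.factorial ι) * (2:ℝ)⁻¹ ^ ι / η *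
        ((ι:ℝ) * ((∏ s ∈ Finset.range j, (α + ι + 1 + s)) / (Nat.factorial j) * (2:ℝ)⁻¹ ^ j) +
          (j:ℝ) * ((∏ s ∈ Finset.range j, (α + ι + 1 + s)) / (Nat.factorial j) * (2:ℝ)⁻¹ ^ j)))
        = fun j => F (ι, j) := by
      funext j
      simp only [hF_def]
      push_cast
      rw [pow_add]
      ring
    rw [hfun] at h1
    have hval : z ^ ι / (Nat.factorial ι) * (2:ℝ)⁻¹ ^ ι / η *
        ((ι:ℝ) * (2:ℝ) ^ (α + (ι:ℝ) + 1) + (α + (ι:ℝ) + 1) * (2:ℝ) ^ (α + (ι:ℝ) + 1)) = A ι := by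
      have h2 : (2:ℝ)⁻¹ ^ ι * (2:ℝ) ^ (α + (ι:ℝ) + 1) = (2:ℝ) ^ (α + 1) := by
        rw [show α + (ι:ℝ) + 1 = (α + 1) + (ι:ℝ) by ring, Real.rpow_add two_pos,
          Real.rpow_natCast, mul_comm ((2:ℝ) ^ (α+1)), ← mul_assoc, ← mul_pow]
        norm_num
      simp only [hA_def]
      linear_combination (z ^ ι / (Nat.factorial ι) / η * (2 * (ι:ℝ) + α + 1)) * h2
    rw [hval] at h1
    exact h1
  set T : ℝ := (2:ℝ) ^ (α+1) / η * ((α+1) * Real.exp z + 2 * (z * Real.exp z)) with hT_def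
  have houter : HasSum A T := by
    have h1 := (((hasSum_expz z).mul_left (α+1)).add ((hasSum_iexpz z).mul_left 2)).mul_left
      ((2:ℝ) ^ (α+1) / η)
    have hfun : (fun ι : ℕ => (2:ℝ) ^ (α+1) / η *
        ((α+1) * (z ^ ι / (Nat.factorial ι)) + 2 * ((ι:ℝ) * (z ^ ι / (Nat.factorial ι))))) = A := by
      funext ι
      simp only [hA_def]
      ring
    rw [hfun] at h1
    exact h1
  have hsumF : Summable F := by
    rw [summable_prod_of_nonneg hFnonneg]
    exact ⟨fun ι => (hinner ι).summable,
      houter.summable.congr fun ι => ((hinner ι).tsum_eq).symm⟩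
  have hFtotal : HasSum F T := by
    have h := hsumF.hasSum
    have heq : ∑' p, F p = T := by
      rw [Summable.tsum_prod' hsumF fun ι => (hinner ι).summable]
      rw [tsum_congr fun ι => (hinner ι).tsum_eq]
      exact houter.tsum_eq
    rwa [heq] at h
  have hgroup : HasSum (fun n : ℕ => ∑ p ∈ Finset.HasAntidiagonal.antidiagonal n, F p) T := by
    apply HasSum.sigma ((Finset.HasAntidiagonal.sigmaAntidiagonalEquivProd (A := ℕ)).hasSum_iff.mpr hFtotal)
    intro n
    have h := hasSum_fintype (fun c : (Finset.HasAntidiagonal.antidiagonal n : Finset (ℕ × ℕ)) => F c)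
    rwa [Finset.sum_coe_sort] at h
  have hterm : ∀ κ : ℕ, (2:ℝ) ^ (-(κ:ℝ)) * lag κ α (-(η*x)/2) * ((κ:ℝ)/η)
      = ∑ p ∈ Finset.HasAntidiagonal.antidiagonal κ, F p := by
    intro κ
    rw [Finset.Nat.sum_antidiagonal_eq_sum_range_succ_mk, lag, Finset.mul_sum, Finset.sum_mul]
    apply Finset.sum_congr rfl
    intro ι hι
    have hικ : ι ≤ κ := Nat.lt_succ_iff.mp (Finset.mem_range.mp hι)
    have hj : ι + (κ - ι) = κ := Nat.add_sub_cancel' hικ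
    have hpow : (2:ℝ) ^ (-(κ:ℝ)) = (2:ℝ)⁻¹ ^ κ := by
      rw [Real.rpow_neg (by norm_num), Real.rpow_natCast, inv_pow]
    have hxz : (-(η*x)/2) = -z := by rw [hz_def]; ring
    simp only [hF_def, hj, hpow, hxz]
    rw [neg_pow z ι]
    have hone : (-1:ℝ)^ι * (-1:ℝ)^ι = 1 := by rw [← mul_pow]; norm_num
    linear_combination ((2:ℝ)⁻¹ ^ κ *
      ((∏ s ∈ Finset.range (κ - ι), (α + ι + 1 + s)) / (Nat.factorial (κ - ι))) *
      ((κ:ℝ)/η) * z ^ ι / (Nat.factorial ι)) * hone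
  rw [Pop]
  rw [tsum_congr hterm, hgroup.tsum_eq]
  have hxz : (-(η*x)/2) = -z := by rw [hz_def]; ring
  rw [hxz, hT_def]
  have h2pow : (2:ℝ) ^ (-α-1) * (2:ℝ) ^ (α+1) = 1 := by
    rw [← Real.rpow_add two_pos]; norm_num
  have hee : Real.exp (-z) * Real.exp z = 1 := by rw [← Real.exp_add]; simp
  have hstep : Real.exp (-z) * (2:ℝ) ^ (-α-1) *
      ((2:ℝ) ^ (α+1) / η * ((α+1) * Real.exp z + 2 * (z * Real.exp z)))
      = ((2:ℝ) ^ (-α-1) * (2:ℝ) ^ (α+1)) * (Real.exp (-z) * Real.exp z) * ((α+1+2*z)/η) := by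
    ring
  rw [hstep, h2pow, hee, hz_def]
  field_simp
  ring
end

section
/- The second moment of P_{η}^{α} is P_{η}^{α}(t²; x) = x² + (x(2α+5)η + α² + 4α + 3)/η². -/
open Real MeasureTheory Filter Set

noncomputable def poch (β : ℝ) (m : ℕ) : ℝ := ∏ s ∈ Finset.range m, (β + s)
noncomputable def aco (β : ℝ) (m : ℕ) : ℝ := poch β m / (Nat.factorial m)

lemma poch_zero (β : ℝ) : poch β 0 = 1 := by simp [poch]

lemma poch_succ (β : ℝ) (n : ℕ) : poch β (n+1) = poch β n * (β + n) := by
  simp [poch, Finset.prod_range_succ]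

lemma poch_succ' (β : ℝ) (n : ℕ) : poch β (n+1) = β * poch (β+1) n := by
  simp only [poch, Finset.prod_range_succ']
  rw [mul_comm]
  congr 1
  · simp
  · apply Finset.prod_congr rfl; intro s _; push_cast; ring

lemma poch_pos {β : ℝ} (hβ : 0 < β) (n : ℕ) : 0 < poch β n := by
  induction n with
  | zero => simp [poch_zero]
  | succ n ih =>
      rw [poch_succ]
      exact mul_pos ih (by positivity)

lemma aco_pos {β : ℝ} (hβ : 0 < β) (n : ℕ) : 0 < aco β n :=
  div_pos (poch_pos hβ n) (by positivity)

lemma aco_succ (β : ℝ) (n : ℕ) : aco β (n+1) = aco β n * ((β + n)/(n+1)) := by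
  unfold aco
  rw [poch_succ, Nat.factorial_succ, div_mul_div_comm]
  congr 1
  push_cast
  ring

lemma aco_shift (β : ℝ) (n : ℕ) : ((n:ℝ)+1) * aco β (n+1) = β * aco (β+1) n := by
  unfold aco
  rw [poch_succ', Nat.factorial_succ]
  have h1 : ((n:ℝ)+1) ≠ 0 := by positivity
  have h2 : ((Nat.factorial n : ℝ)) ≠ 0 := by positivity
  push_cast
  field_simp

lemma summable_aco {β : ℝ} (hβ : 0 < β) {t : ℝ} (ht : |t| < 1) :
    Summable (fun n => aco β n * t ^ n) := by
  rcases eq_or_ne t 0 with rfl | ht0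
  · apply summable_of_ne_finset_zero (s := {0})
    intro n hn
    simp only [Finset.mem_singleton] at hn
    rw [zero_pow hn, mul_zero]
  · apply summable_of_ratio_norm_eventually_le (r := (1 + |t|)/2)
    · have := abs_nonneg t; linarith
    · filter_upwards [eventually_ge_atTop ⌈2*β/(1-|t|)⌉₊] with n hn
      have habs : 0 ≤ |t| := abs_nonneg t
      have h1 : (2*β/(1-|t|)) ≤ (n:ℝ) := by
        calc (2*β/(1-|t|)) ≤ (⌈2*β/(1-|t|)⌉₊ : ℝ) := Nat.le_ceil _
        _ ≤ (n:ℝ) := by exact_mod_cast hn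
      have h2 : 2*β ≤ (n:ℝ)*(1-|t|) := by
        rw [div_le_iff₀ (by linarith)] at h1; linarith
      have key : (β + n)/((n:ℝ)+1) * |t| ≤ (1 + |t|)/2 := by
        rw [div_mul_eq_mul_div, div_le_div_iff₀ (by positivity) two_pos]
        nlinarith [mul_nonneg (Nat.cast_nonneg n : (0:ℝ) ≤ n) habs]
      have hpos : (0:ℝ) < aco β n * |t|^n := by
        have := aco_pos hβ n
        have : 0 < |t| := abs_pos.mpr ht0
        positivity
      calc ‖aco β (n+1) * t^(n+1)‖ = aco β (n+1) * |t|^(n+1) := by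
            rw [norm_mul, Real.norm_eq_abs, Real.norm_eq_abs,
              abs_of_pos (aco_pos hβ (n+1)), abs_pow]
      _ = (β + n)/((n:ℝ)+1) * |t| * (aco β n * |t|^n) := by
            rw [aco_succ, pow_succ]; ring
      _ ≤ (1 + |t|)/2 * (aco β n * |t|^n) := by
            apply mul_le_mul_of_nonneg_right key (le_of_lt hpos)
      _ = (1 + |t|)/2 * ‖aco β n * t^n‖ := by
            rw [norm_mul, Real.norm_eq_abs, Real.norm_eq_abs,
              abs_of_pos (aco_pos hβ n), abs_pow]

lemma aco_succ_mul (β : ℝ) (n : ℕ) : ((n:ℝ)+1) * aco β (n+1) = (β + n) * aco β n := by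
  rw [aco_succ]
  field_simp

lemma aco_bn (β : ℝ) (n : ℕ) : (β + n) * aco β n = β * aco (β+1) n := by
  rw [← aco_succ_mul, aco_shift]

lemma summable_n_aco {β : ℝ} (hβ : 0 < β) {t : ℝ} (ht : |t| < 1) :
    Summable (fun n : ℕ => (n:ℝ) * (aco β n * t^n)) := by
  rw [← summable_nat_add_iff 1]
  apply (Summable.mul_left (β * t) (summable_aco (by linarith : (0:ℝ) < β+1) ht)).congr
  intro n
  push_cast
  rw [pow_succ]
  linear_combination (-(t^n * t)) * aco_shift β n

lemma summable_bn_aco {β : ℝ} (hβ : 0 < β) {t : ℝ} (ht : |t| < 1) :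
    Summable (fun n : ℕ => (β + (n:ℝ)) * (aco β n * t^n)) := by
  apply (Summable.mul_left β (summable_aco (by linarith : (0:ℝ) < β+1) ht)).congr
  intro n
  linear_combination (t^n) * (aco_bn β n).symm

lemma hasSum_binom {β : ℝ} (hβ : 0 < β) :
    HasSum (fun n => aco β n * (1/2:ℝ)^n) ((2:ℝ)^β) := by
  set g : ℝ → ℝ := fun t => ∑' n, aco β n * t^n with hgdef
  set s : Set ℝ := Ioo (-(3/4):ℝ) (3/4) with hsdef
  have h34 : |(3/4:ℝ)| < 1 := by rw [abs_of_pos] <;> norm_num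
  have hU : Summable (fun n : ℕ => aco β n * (n:ℝ) * (3/4:ℝ)^(n-1)) := by
    apply ((summable_n_aco hβ h34).mul_left (4/3:ℝ)).congr
    intro n
    match n with
    | 0 => simp
    | (m+1) =>
      rw [Nat.add_sub_cancel, pow_succ]
      push_cast
      ring
  have hderiv : ∀ n : ℕ, ∀ z ∈ s, HasDerivAt (fun t : ℝ => aco β n * t^n)
      (aco β n * ((n:ℝ) * z^(n-1))) z := fun n z _ => (hasDerivAt_pow n z).const_mul _
  have habs34 : ∀ z ∈ s, |z| ≤ 3/4 := by
    intro z hz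
    rw [hsdef, mem_Ioo] at hz
    rw [abs_le]
    constructor <;> linarith [hz.1, hz.2]
  have hbound : ∀ n : ℕ, ∀ z ∈ s, ‖aco β n * ((n:ℝ) * z^(n-1))‖ ≤
      aco β n * (n:ℝ) * (3/4:ℝ)^(n-1) := by
    intro n z hz
    rw [norm_mul, norm_mul, Real.norm_eq_abs, Real.norm_eq_abs, Real.norm_eq_abs,
      abs_of_pos (aco_pos hβ n), abs_of_nonneg (Nat.cast_nonneg n : (0:ℝ) ≤ n), ← mul_assoc,
      abs_pow]
    have : |z|^(n-1) ≤ (3/4:ℝ)^(n-1) := pow_le_pow_left₀ (abs_nonneg z) (habs34 z hz) _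
    have hnn : (0:ℝ) ≤ aco β n * n := by
      have := aco_pos hβ n
      positivity
    exact mul_le_mul_of_nonneg_left this hnn
  have hsum0 : Summable (fun n => aco β n * (0:ℝ)^n) := by
    apply summable_of_ne_finset_zero (s := {0})
    intro n hn
    simp only [Finset.mem_singleton] at hn
    rw [zero_pow hn, mul_zero]
  have h0s : (0:ℝ) ∈ s := by rw [hsdef, mem_Ioo]; norm_num
  have HD : ∀ z ∈ s, HasDerivAt g (∑' n : ℕ, aco β n * ((n:ℝ) * z^(n-1))) z := by
    intro z hz
    exact hasDerivAt_tsum_of_isPreconnected hU isOpen_Ioo (convex_Ioo _ _).isPreconnected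
      hderiv hbound h0s hsum0 hz
  have hz1 : ∀ z ∈ s, |z| < 1 := fun z hz => lt_of_le_of_lt (habs34 z hz) (by norm_num)
  have hDz : ∀ z ∈ s, ∑' n : ℕ, aco β n * ((n:ℝ) * z^(n-1)) =
      ∑' n : ℕ, (β + (n:ℝ)) * (aco β n * z^n) := by
    intro z hz
    have hsL : Summable (fun n => aco β n * ((n:ℝ) * z^(n-1))) :=
      Summable.of_norm_bounded hU (fun n => hbound n z hz)
    rw [Summable.tsum_eq_zero_add hsL]
    simp only [Nat.cast_zero, zero_mul, mul_zero, zero_add]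
    apply tsum_congr
    intro n
    rw [Nat.add_sub_cancel]
    push_cast
    linear_combination z^n * (aco_succ_mul β n)
  have key : ∀ z ∈ s, (1 - z) * (∑' n : ℕ, aco β n * ((n:ℝ) * z^(n-1))) = β * g z := by
    intro z hz
    rw [hDz z hz]
    have hs1 : Summable (fun n : ℕ => (β + (n:ℝ)) * (aco β n * z^n)) := summable_bn_aco hβ (hz1 z hz)
    have hs2 : Summable (fun n : ℕ => (n:ℝ) * (aco β n * z^n)) := summable_n_aco hβ (hz1 z hz)
    have hs0 : Summable (fun n => aco β n * z^n) := summable_aco hβ (hz1 z hz)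
    have hzD : z * ∑' n : ℕ, (β + (n:ℝ)) * (aco β n * z^n) = ∑' n : ℕ, (n:ℝ) * (aco β n * z^n) := by
      rw [← tsum_mul_left, Summable.tsum_eq_zero_add hs2]
      simp only [Nat.cast_zero, zero_mul, zero_add]
      apply tsum_congr
      intro n
      push_cast
      rw [pow_succ]
      linear_combination (-(z^n * z)) * (aco_succ_mul β n)
    have expand : (1 - z) * (∑' n : ℕ, (β + (n:ℝ)) * (aco β n * z^n)) =
        (∑' n : ℕ, (β + (n:ℝ)) * (aco β n * z^n)) - z * ∑' n : ℕ, (β + (n:ℝ)) * (aco β n * z^n) := by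
      ring
    rw [expand, hzD, ← Summable.tsum_sub hs1 hs2, hgdef]
    simp only
    rw [← tsum_mul_left]
    apply tsum_congr
    intro n
    ring
  set φ : ℝ → ℝ := fun t => g t * (1-t)^β with hφdef
  have hφd : ∀ z ∈ s, HasDerivAt φ 0 z := by
    intro z hz
    have hzmem := hz
    rw [hsdef, mem_Ioo] at hzmem
    have h1z : (0:ℝ) < 1 - z := by linarith [hzmem.2]
    have hlin : HasDerivAt (fun t : ℝ => 1 - t) (-1) z := by
      simpa using (hasDerivAt_id z).const_sub 1
    have hrp : HasDerivAt (fun t : ℝ => (1-t)^β) (β * (1-z)^(β-1) * (-1)) z :=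
      (Real.hasDerivAt_rpow_const (x := 1-z) (p := β) (Or.inl (ne_of_gt h1z))).comp z hlin
    have hgd := HD z hz
    have hprod := hgd.mul hrp
    have hzero : (∑' n : ℕ, aco β n * ((n:ℝ) * z^(n-1))) * (1-z)^β +
        g z * (β * (1-z)^(β-1) * (-1)) = 0 := by
      have hk := key z hz
      have h2 : (1-z)^(β-1) = (1-z)^β / (1-z) := by
        rw [Real.rpow_sub h1z, Real.rpow_one]
      rw [h2]
      generalize (∑' n : ℕ, aco β n * ((n:ℝ) * z^(n-1))) = S at hk ⊢
      field_simp
      linear_combination ((1-z)^β) * hk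
    rw [hzero] at hprod
    exact hprod
  have hmem : ∀ z ∈ Icc (0:ℝ) (1/2), z ∈ s := by
    intro z hz
    rw [mem_Icc] at hz
    rw [hsdef, mem_Ioo]
    constructor <;> linarith [hz.1, hz.2]
  have hcont : ContinuousOn φ (Icc 0 (1/2)) := fun z hz =>
    ((hφd z (hmem z hz)).continuousAt).continuousWithinAt
  have h12 : φ (1/2) = φ 0 :=
    constant_of_has_deriv_right_zero hcont
      (fun z hz => ((hφd z (hmem z (Ico_subset_Icc_self hz))).hasDerivWithinAt))
      (1/2) (by norm_num [mem_Icc])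
  have hg0 : g 0 = 1 := by
    rw [hgdef]
    simp only
    rw [tsum_eq_single 0 (fun n hn => by rw [zero_pow hn, mul_zero])]
    simp [aco, poch_zero]
  have hφ0 : φ 0 = 1 := by
    rw [hφdef]
    simp only [sub_zero, Real.one_rpow, mul_one, hg0]
  have hval : g (1/2) * ((1/2:ℝ))^β = 1 := by
    have := h12
    rw [hφ0, hφdef] at this
    norm_num at this ⊢
    exact this
  have hhalf : ((1/2:ℝ))^β = ((2:ℝ)^β)⁻¹ := by
    rw [one_div, ← Real.inv_rpow (by norm_num : (0:ℝ) ≤ 2)]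
  have h2β : (0:ℝ) < (2:ℝ)^β := Real.rpow_pos_of_pos two_pos β
  have hgval : g (1/2) = (2:ℝ)^β := by
    rw [hhalf] at hval
    field_simp at hval
    linarith [hval]
  have hsummable : Summable (fun n : ℕ => aco β n * (1/2:ℝ)^n) :=
    summable_aco hβ (by rw [abs_of_pos] <;> norm_num)
  rw [← hgval]
  exact hsummable.hasSum


lemma two_rpow_add_one (β : ℝ) : (2:ℝ)^(β+1) = (2:ℝ)^β * 2 := by
  rw [Real.rpow_add two_pos, Real.rpow_one]

lemma hasSum_binom_n {β : ℝ} (hβ : 0 < β) :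
    HasSum (fun n : ℕ => (n:ℝ) * (aco β n * (1/2:ℝ)^n)) (β * (2:ℝ)^β) := by
  set f : ℕ → ℝ := fun n : ℕ => (n:ℝ) * (aco β n * (1/2:ℝ)^n) with hfdef
  have h1 := (hasSum_binom (by linarith : (0:ℝ) < β+1)).mul_left (β/2)
  have heq : (fun n : ℕ => (β/2) * (aco (β+1) n * (1/2:ℝ)^n)) = fun n : ℕ => f (n+1) := by
    funext n
    rw [hfdef]
    simp only
    push_cast
    rw [pow_succ]
    linear_combination ((1/2:ℝ)^n * (1/2)) * (aco_shift β n).symm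
  rw [heq] at h1
  have h2 := (hasSum_nat_add_iff (f := f) 1).mp h1
  have : β / 2 * (2:ℝ)^(β+1) + ∑ i ∈ Finset.range 1, f i = β * (2:ℝ)^β := by
    rw [two_rpow_add_one]
    simp [hfdef]
    ring
  rwa [this] at h2

lemma hasSum_binom_nn {β : ℝ} (hβ : 0 < β) :
    HasSum (fun n : ℕ => (n:ℝ) * ((n:ℝ)-1) * (aco β n * (1/2:ℝ)^n)) (β * (β+1) * (2:ℝ)^β) := by
  set f : ℕ → ℝ := fun n : ℕ => (n:ℝ) * ((n:ℝ)-1) * (aco β n * (1/2:ℝ)^n) with hfdef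
  have h1 := (hasSum_binom (by linarith : (0:ℝ) < β+2)).mul_left (β*(β+1)/4)
  have heq : (fun n : ℕ => (β*(β+1)/4) * (aco (β+2) n * (1/2:ℝ)^n)) = fun n : ℕ => f (n+2) := by
    funext n
    rw [hfdef]
    simp only
    push_cast
    have e1 : ((n:ℝ)+2) * aco β (n+2) = β * aco (β+1) (n+1) := by
      have := aco_shift β (n+1)
      push_cast at this
      linarith [this]
    have e2 : ((n:ℝ)+1) * aco (β+1) (n+1) = (β+1) * aco (β+2) n := by
      have := aco_shift (β+1) n
      rw [show β+1+1 = β+2 by ring] at this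
      linarith [this]
    have hp : (1/2:ℝ)^(n+2) = (1/2:ℝ)^n * (1/4) := by rw [pow_add]; norm_num
    rw [hp]
    linear_combination (-((1/2:ℝ)^n/4)) * ((((n:ℝ)+1)) * e1 + β * e2)
  rw [heq] at h1
  have h2 := (hasSum_nat_add_iff (f := f) 2).mp h1
  have : β*(β+1)/4 * (2:ℝ)^(β+2) + ∑ i ∈ Finset.range 2, f i = β * (β+1) * (2:ℝ)^β := by
    have : (2:ℝ)^(β+2) = (2:ℝ)^β * 4 := by
      rw [show β+2 = β+1+1 by ring, two_rpow_add_one, two_rpow_add_one]; ring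
    rw [this]
    simp [hfdef, Finset.sum_range_succ]
    ring
  rwa [this] at h2

lemma hasSum_exp0 (y : ℝ) : HasSum (fun n : ℕ => y^n / (Nat.factorial n)) (Real.exp y) := by
  have hs := Real.summable_pow_div_factorial y
  have ht : ∑' n : ℕ, y^n / (Nat.factorial n) = Real.exp y := by
    rw [Real.exp_eq_exp_ℝ, NormedSpace.exp_eq_tsum_div]
  exact ht ▸ hs.hasSum

lemma hasSum_exp1 (y : ℝ) :
    HasSum (fun n : ℕ => (n:ℝ) * (y^n / (Nat.factorial n))) (y * Real.exp y) := by
  set f : ℕ → ℝ := fun n : ℕ => (n:ℝ) * (y^n / (Nat.factorial n)) with hfdef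
  have h1 := (hasSum_exp0 y).mul_left y
  have heq : (fun n : ℕ => y * (y^n / (Nat.factorial n))) = fun n : ℕ => f (n+1) := by
    funext n
    rw [hfdef]
    simp only [Nat.factorial_succ]
    push_cast
    rw [pow_succ]
    have h0 : ((Nat.factorial n : ℝ)) ≠ 0 := by positivity
    field_simp
  rw [heq] at h1
  have h2 := (hasSum_nat_add_iff (f := f) 1).mp h1
  simpa [hfdef] using h2

lemma hasSum_exp2 (y : ℝ) :
    HasSum (fun n : ℕ => (n:ℝ) * ((n:ℝ)-1) * (y^n / (Nat.factorial n))) (y^2 * Real.exp y) := by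
  set f : ℕ → ℝ := fun n : ℕ => (n:ℝ) * ((n:ℝ)-1) * (y^n / (Nat.factorial n)) with hfdef
  have h1 := (hasSum_exp0 y).mul_left (y^2)
  have heq : (fun n : ℕ => y^2 * (y^n / (Nat.factorial n))) = fun n : ℕ => f (n+2) := by
    funext n
    rw [hfdef]
    simp only [Nat.factorial_succ]
    push_cast
    rw [pow_add]
    have h0 : ((Nat.factorial n : ℝ)) ≠ 0 := by positivity
    field_simp
    ring
  rw [heq] at h1
  have h2 := (hasSum_nat_add_iff (f := f) 2).mp h1
  simpa [hfdef, Finset.sum_range_succ] using h2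


/-- The second moment of `P_η^α`. -/
theorem stmt5 (α η x : ℝ) (hα : -1 < α) (hη : 0 < η) (hx : 0 ≤ x) :
    Pop η α (fun t => t ^ 2) x =
      x ^ 2 + (x * (2 * α + 5) * η + α ^ 2 + 4 * α + 3) / η ^ 2 := by
  set y : ℝ := η * x / 2 with hydef
  have hy : 0 ≤ y := by positivity
  set F : ℕ → ℕ → ℝ := fun ι m =>
    (y^ι / (Nat.factorial ι) * (1/2:ℝ)^ι) *
      (aco (α+ι+1) m * (1/2:ℝ)^m * (((ι:ℝ)+(m:ℝ))/η)^2) with hFdef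
  have hβpos : ∀ ι : ℕ, (0:ℝ) < α + ι + 1 := by
    intro ι
    have : (0:ℝ) ≤ ι := Nat.cast_nonneg ι
    linarith
  -- row sums
  have hrow : ∀ ι : ℕ, HasSum (fun m : ℕ => F ι m)
      ((y^ι / (Nat.factorial ι) * (1/2:ℝ)^ι) * ((1/η^2) * ((2:ℝ)^(α+ι+1) *
        ((ι:ℝ)^2 + (2*ι+1)*(α+ι+1) + (α+ι+1)*((α+ι+1)+1))))) := by
    intro ι
    set β : ℝ := α + ι + 1 with hβdef
    have hβ : 0 < β := hβpos ι
    have hin : HasSum (fun m : ℕ => (1/η^2) * ((ι:ℝ)^2 * (aco β m * (1/2:ℝ)^m)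
        + (2*(ι:ℝ)+1) * ((m:ℝ) * (aco β m * (1/2:ℝ)^m))
        + (m:ℝ)*((m:ℝ)-1) * (aco β m * (1/2:ℝ)^m)))
        ((1/η^2) * ((2:ℝ)^β * ((ι:ℝ)^2 + (2*ι+1)*β + β*(β+1)))) := by
      have h := (((hasSum_binom hβ).mul_left ((ι:ℝ)^2)).add
        ((hasSum_binom_n hβ).mul_left (2*(ι:ℝ)+1))).add (hasSum_binom_nn hβ)
      have := h.mul_left (1/η^2)
      convert this using 1
      · rfl
      · ring
    have hms := hin.mul_left (y^ι / (Nat.factorial ι) * (1/2:ℝ)^ι)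
    have hfe : (fun m : ℕ => F ι m) = (fun m : ℕ =>
        (y^ι / (Nat.factorial ι) * (1/2:ℝ)^ι) * ((1/η^2) * ((ι:ℝ)^2 * (aco β m * (1/2:ℝ)^m)
        + (2*(ι:ℝ)+1) * ((m:ℝ) * (aco β m * (1/2:ℝ)^m))
        + (m:ℝ)*((m:ℝ)-1) * (aco β m * (1/2:ℝ)^m)))) := by
      funext m
      rw [hFdef]
      simp only
      rw [div_pow]
      have hη2 : (η:ℝ)^2 ≠ 0 := by positivity
      field_simp
      ring
    rw [hfe]
    exact hms
  have hpow : ∀ ι : ℕ, (1/2:ℝ)^ι * (2:ℝ)^(α+(ι:ℝ)+1) = (2:ℝ)^(α+1) := by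
    intro ι
    rw [show α+(ι:ℝ)+1 = (α+1) + (ι:ℝ) by ring, Real.rpow_add two_pos, Real.rpow_natCast,
      one_div, inv_pow]
    have h2ι : ((2:ℝ)^ι) ≠ 0 := by positivity
    field_simp
  set T : ℝ := (2:ℝ)^(α+1)/η^2 * (4*(y^2*Real.exp y) + (4*α+10)*(y*Real.exp y)
      + (α^2+4*α+3)*Real.exp y) with hTdef
  have houter : HasSum (fun ι : ℕ => (y^ι / (Nat.factorial ι) * (1/2:ℝ)^ι) *
      ((1/η^2) * ((2:ℝ)^(α+ι+1) *
        ((ι:ℝ)^2 + (2*ι+1)*(α+ι+1) + (α+ι+1)*((α+ι+1)+1))))) T := by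
    have h := (((hasSum_exp2 y).mul_left 4).add ((hasSum_exp1 y).mul_left (4*α+10))).add
      ((hasSum_exp0 y).mul_left (α^2+4*α+3))
    have h2 := h.mul_left ((2:ℝ)^(α+1)/η^2)
    have hfe : (fun ι : ℕ => (y^ι / (Nat.factorial ι) * (1/2:ℝ)^ι) *
        ((1/η^2) * ((2:ℝ)^(α+ι+1) *
        ((ι:ℝ)^2 + (2*ι+1)*(α+ι+1) + (α+ι+1)*((α+ι+1)+1))))) =
        (fun ι : ℕ => ((2:ℝ)^(α+1)/η^2) *
          (4*((ι:ℝ)*((ι:ℝ)-1)*(y^ι / (Nat.factorial ι)))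
          + (4*α+10)*((ι:ℝ)*(y^ι / (Nat.factorial ι)))
          + (α^2+4*α+3)*(y^ι / (Nat.factorial ι)))) := by
      funext ι
      linear_combination ((y^ι / (Nat.factorial ι : ℝ)) * (1/η^2) *
        ((ι:ℝ)^2 + (2*ι+1)*(α+ι+1) + (α+ι+1)*((α+ι+1)+1))) * hpow ι
    rw [hfe, hTdef]
    convert h2 using 1
  have hFnonneg : ∀ p : ℕ × ℕ, 0 ≤ F p.1 p.2 := by
    intro p
    rw [hFdef]
    have h1 := (aco_pos (hβpos p.1) p.2).le
    have h2 : (0:ℝ) ≤ y^p.1 := by positivity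
    positivity
  have hPsum : Summable (fun p : ℕ × ℕ => F p.1 p.2) := by
    rw [summable_prod_of_nonneg (fun p => hFnonneg p)]
    refine ⟨fun ι => (hrow ι).summable, ?_⟩
    apply houter.summable.congr
    intro ι
    exact ((hrow ι).tsum_eq).symm
  have hPtsum : ∑' p : ℕ × ℕ, F p.1 p.2 = T := by
    rw [Summable.tsum_prod' hPsum (fun ι => (hrow ι).summable)]
    calc ∑' (ι : ℕ) (m : ℕ), F ι m = ∑' ι : ℕ, (y^ι / (Nat.factorial ι) * (1/2:ℝ)^ι) *
        ((1/η^2) * ((2:ℝ)^(α+ι+1) *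
        ((ι:ℝ)^2 + (2*ι+1)*(α+ι+1) + (α+ι+1)*((α+ι+1)+1)))) :=
          tsum_congr (fun ι => (hrow ι).tsum_eq)
    _ = T := houter.tsum_eq
  set G : ℕ × ℕ → ℝ := fun q => if q.2 ≤ q.1 then F q.2 (q.1 - q.2) else 0 with hGdef
  set inj : ℕ × ℕ → ℕ × ℕ := fun p => (p.1 + p.2, p.1) with hinjdef
  have hinj : Function.Injective inj := by
    intro a b hab
    rw [hinjdef, Prod.ext_iff] at hab
    simp only at hab
    obtain ⟨h1, h2⟩ := hab
    exact Prod.ext h2 (by omega)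
  have hcomp : ∀ p : ℕ × ℕ, G (inj p) = F p.1 p.2 := by
    intro p
    rw [hGdef, hinjdef]
    simp [Nat.le_add_right, Nat.add_sub_cancel_left]
  have hsupp : Function.support G ⊆ Set.range inj := by
    intro q hq
    rw [Function.mem_support] at hq
    by_cases hle : q.2 ≤ q.1
    · refine ⟨(q.2, q.1 - q.2), ?_⟩
      rw [hinjdef]
      simp only
      rw [Prod.ext_iff]
      exact ⟨by omega, rfl⟩
    · exact absurd (by rw [hGdef]; simp [hle]) hq
  have hGtsum : ∑' q : ℕ × ℕ, G q = T := by
    rw [← hinj.tsum_eq hsupp]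
    rw [tsum_congr hcomp]
    exact hPtsum
  have hsupp0 : ∀ q ∉ Set.range inj, G q = 0 := by
    intro q hq
    by_contra h
    exact hq (hsupp h)
  have hGsummable : Summable G := by
    rw [← hinj.summable_iff hsupp0]
    exact hPsum.congr (fun p => (hcomp p).symm)
  have hrowG : ∀ κ : ℕ, ∀ ι ∉ Finset.range (κ+1), G (κ, ι) = 0 := by
    intro κ ι hι
    rw [Finset.mem_range] at hι
    have : ¬ (ι ≤ κ) := by omega
    rw [hGdef]
    simp [this]
  have hterm : ∀ κ : ℕ, (2:ℝ)^(-(κ:ℝ)) * lag κ α (-(η*x)/2) * ((κ:ℝ)/η)^2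
      = ∑' ι : ℕ, G (κ, ι) := by
    intro κ
    rw [tsum_eq_sum (hrowG κ)]
    rw [show (2:ℝ)^(-(κ:ℝ)) = (1/2:ℝ)^κ by
      rw [Real.rpow_neg two_pos.le, Real.rpow_natCast, one_div, inv_pow]]
    unfold lag
    rw [Finset.mul_sum, Finset.sum_mul]
    apply Finset.sum_congr rfl
    intro ι hι
    rw [Finset.mem_range] at hι
    have hle : ι ≤ κ := Nat.lt_succ_iff.mp hι
    rw [hGdef]
    simp only
    rw [if_pos hle, hFdef]
    simp only
    have hκι : ι + (κ - ι) = κ := by omega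
    have hcast : ((ι:ℝ) + ((κ - ι : ℕ):ℝ)) = (κ:ℝ) := by
      rw [Nat.cast_sub hle]; ring
    have hpow2 : (1/2:ℝ)^κ = (1/2:ℝ)^ι * (1/2:ℝ)^(κ-ι) := by rw [← pow_add, hκι]
    have hyι : (-1:ℝ)^ι * (-(η*x)/2)^ι = y^ι := by
      rw [← mul_pow]
      congr 1
      rw [hydef]
      ring
    rw [hpow2, hcast, ← hyι]
    unfold aco poch
    ring
  have hrowGsummable : ∀ κ : ℕ, Summable (fun ι : ℕ => G (κ, ι)) :=
    fun κ => summable_of_ne_finset_zero (hrowG κ)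
  have hsum_t : ∑' κ : ℕ, (2:ℝ)^(-(κ:ℝ)) * lag κ α (-(η*x)/2) * ((κ:ℝ)/η)^2 = T := by
    rw [tsum_congr hterm, ← Summable.tsum_prod' hGsummable hrowGsummable]
    exact hGtsum
  unfold Pop
  simp only
  rw [hsum_t, hTdef]
  have hE : Real.exp (-(η*x)/2) * Real.exp y = 1 := by
    rw [← Real.exp_add, hydef, show -(η*x)/2 + η*x/2 = 0 by ring, Real.exp_zero]
  have h2p : (2:ℝ)^(-α-1) * (2:ℝ)^(α+1) = 1 := by
    rw [← Real.rpow_add two_pos, show -α-1+(α+1) = 0 by ring, Real.rpow_zero]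
  rw [show 4*(y^2*Real.exp y) + (4*α+10)*(y*Real.exp y) + (α^2+4*α+3)*Real.exp y
      = (4*y^2 + (4*α+10)*y + (α^2+4*α+3)) * Real.exp y by ring]
  rw [show Real.exp (-(η*x)/2) * (2:ℝ)^(-α-1) * ((2:ℝ)^(α+1)/η^2 *
      ((4*y^2 + (4*α+10)*y + (α^2+4*α+3)) * Real.exp y))
      = (Real.exp (-(η*x)/2) * Real.exp y) * ((2:ℝ)^(-α-1) * (2:ℝ)^(α+1)) *
        (4*y^2 + (4*α+10)*y + (α^2+4*α+3)) / η^2 by ring]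
  rw [hE, h2p, hydef]
  have hη2 : η^2 ≠ 0 := by positivity
  field_simp
  ring
end
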